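/- Any finite family of vectors u_1, ..., u_m in ℝ^d satisfying ⟨u_i, u_j⟩ < 0 for all i ≠ j has at most d + 1 elements, i.e., m ≤ d + 1. -/
import Mathlib


open scoped RealInnerProductSpace

/-- Any family of `m` vectors in `ℝ^d` with pairwise strictly negative inner
products satisfies `m ≤ d + 1` (Lemma 8 of Rankin). -/
theorem card_le_of_pairwise_inner_neg {d m : ℕ} (u : Fin m → EuclideanSpace ℝ (Fin d))
    (h : ∀ i j : Fin m, i ≠ j → ⟪u i, u j⟫ < 0) :
    m ≤ d + 1 := by
  by_contra hm
  push_neg at hm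
  set v : Fin (d + 1) → EuclideanSpace ℝ (Fin d) := fun i => u ⟨i.1, by omega⟩ with hv
  have hne : ∀ i j : Fin (d + 1), i ≠ j → ⟪v i, v j⟫ < 0 := by
    intro i j hij
    exact h _ _ (by simpa [Fin.ext_iff] using (Fin.val_ne_of_ne hij))
  -- no nontrivial nonnegative combination of the v's vanishes
  have key : ∀ a : Fin (d + 1) → ℝ, (∀ i, 0 ≤ a i) → (∃ i, 0 < a i) →
      ∑ i, a i • v i ≠ 0 := by
    rintro a ha ⟨i0, hi0⟩ hsum
    set j0 : Fin m := ⟨d + 1, by omega⟩ with hj0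
    have hvij : ∀ i : Fin (d + 1), ⟪v i, u j0⟫ < 0 := by
      intro i
      refine h _ _ (fun hc => ?_)
      have h4 := congrArg Fin.val hc
      have hi2 := i.isLt
      simp only [hj0] at h4
      omega
    have h0 : ⟪∑ i, a i • v i, u j0⟫ = 0 := by rw [hsum, inner_zero_left]
    have hlt : ⟪∑ i, a i • v i, u j0⟫ < 0 := by
      rw [sum_inner]
      simp only [real_inner_smul_left]
      have : ∀ i ∈ Finset.univ, a i * ⟪v i, u j0⟫ ≤ 0 :=
        fun i _ => mul_nonpos_of_nonneg_of_nonpos (ha i) (hvij i).le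
      calc ∑ i, a i * ⟪v i, u j0⟫ < ∑ _i : Fin (d + 1), (0 : ℝ) := by
            refine Finset.sum_lt_sum this ⟨i0, Finset.mem_univ _, ?_⟩
            exact mul_neg_of_pos_of_neg hi0 (hvij i0)
        _ = 0 := by simp
    exact absurd h0 (ne_of_lt hlt)
  -- d + 1 vectors in ℝ^d are dependent
  have hdep : ¬ LinearIndependent ℝ v := by
    intro hli
    have := hli.fintype_card_le_finrank
    simp [finrank_euclideanSpace] at this
  obtain ⟨c, hcsum, i0, hi0⟩ := Fintype.not_linearIndependent_iff.mp hdep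
  set P : Finset (Fin (d + 1)) := Finset.univ.filter (fun i => 0 < c i) with hP
  set N : Finset (Fin (d + 1)) := Finset.univ.filter (fun i => c i < 0) with hN
  have hPN : Disjoint P N := by
    simp only [hP, hN, Finset.disjoint_filter]
    intro i _ hpos
    simp only [not_lt]
    exact le_of_lt hpos
  have hzero : ∀ i ∈ Finset.univ, i ∉ P ∪ N → c i • v i = 0 := by
    intro i _ hi
    rw [Finset.mem_union] at hi
    have h1 : i ∉ P := fun hh => hi (Or.inl hh)
    have h2 : i ∉ N := fun hh => hi (Or.inr hh)
    simp only [hP, Finset.mem_filter, Finset.mem_univ, true_and, not_lt] at h1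
    simp only [hN, Finset.mem_filter, Finset.mem_univ, true_and, not_lt] at h2
    have : c i = 0 := le_antisymm h1 h2
    simp [this]
  have hsplit : ∑ i ∈ P, c i • v i + ∑ i ∈ N, c i • v i = 0 := by
    rw [← Finset.sum_union hPN,
      Finset.sum_subset (Finset.subset_univ (P ∪ N)) (fun i hi hni => hzero i hi hni)]
    exact hcsum
  by_cases hNe : N = ∅
  · -- all coefficients nonneg
    have ha : ∀ i, 0 ≤ c i := by
      intro i
      by_contra hneg
      push_neg at hneg
      have : i ∈ N := by simp [hN, hneg]
      simp [hNe] at this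
    have hpos : ∃ i, 0 < c i := ⟨i0, lt_of_le_of_ne (ha i0) (Ne.symm hi0)⟩
    exact key c ha hpos hcsum
  · by_cases hPe : P = ∅
    · -- all coefficients nonpos; use -c
      have ha : ∀ i, 0 ≤ -c i := by
        intro i
        by_contra hneg
        push_neg at hneg
        have : i ∈ P := by simp [hP]; linarith
        simp [hPe] at this
      have hpos : ∃ i, 0 < -c i := by
        refine ⟨i0, ?_⟩
        rcases lt_or_gt_of_ne hi0 with h1 | h1
        · linarith
        · exfalso
          have : i0 ∈ P := by simp [hP, h1]
          simp [hPe] at this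
      refine key (fun i => -c i) ha hpos ?_
      simp only [neg_smul]
      rw [Finset.sum_neg_distrib, hcsum, neg_zero]
    · -- both P and N nonempty: contradiction via ⟪z, z⟫
      have hPne : P.Nonempty := Finset.nonempty_of_ne_empty hPe
      have hNne : N.Nonempty := Finset.nonempty_of_ne_empty hNe
      set z := ∑ i ∈ P, c i • v i with hz
      have hzN : z = ∑ j ∈ N, (-c j) • v j := by
        have h5 : z = -∑ j ∈ N, c j • v j := eq_neg_of_add_eq_zero_left hsplit
        rw [h5, ← Finset.sum_neg_distrib]
        simp [neg_smul]
      have h1 : (0 : ℝ) ≤ ⟪z, z⟫ := real_inner_self_nonneg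
      have h2 : ⟪(∑ i ∈ P, c i • v i), (∑ j ∈ N, (-c j) • v j)⟫ < 0 := by
        rw [sum_inner]
        refine Finset.sum_neg ?_ hPne
        intro i hi
        rw [inner_sum]
        refine Finset.sum_neg ?_ hNne
        intro j hj
        rw [real_inner_smul_left, real_inner_smul_right]
        have hci : 0 < c i := by simpa [hP] using hi
        have hcj : c j < 0 := by simpa [hN] using hj
        have hij : i ≠ j := by rintro rfl; linarith
        have := hne i j hij
        have h3 : 0 < -c j := by linarith
        have h4 : (0:ℝ) < c i * -c j := mul_pos hci h3
        nlinarith [mul_neg_of_pos_of_neg h4 this]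
      rw [← hz, ← hzN] at h2
      linarith
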